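/- arXiv:1311.2518 — 4 statements merged into one kernel-verified Lean document; each statement's English description precedes it below -/
import Mathlib

section
/- The Hata attractor K contains the interval [0,1]: if K is the unique nonempty compact set with K = F₁(K) ∪ F₂(K), then [0,1] ⊆ K. -/
open Complex Set

theorem stmt_5 (α : ℂ) (hα : 0 < ‖α‖) (hα1 : ‖α‖ < 1)
    (hα' : 0 < ‖(1 - α)‖) (hα'1 : ‖(1 - α)‖ < 1)
    (F₁ F₂ : ℂ → ℂ)
    (hF₁ : ∀ z, F₁ z = α * (starRingEnd ℂ) z)
    (hF₂ : ∀ z, F₂ z = (1 - (‖α‖ : ℂ)^2) * (starRingEnd ℂ) z + (‖α‖ : ℂ)^2)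
    (K : Set ℂ) (hKne : K.Nonempty) (hKc : IsCompact K)
    (hK : K = F₁ '' K ∪ F₂ '' K) :
    (fun x : ℝ => (x : ℂ)) '' Icc 0 1 ⊆ K := by
  intro z hz
  obtain ⟨x, hx, rfl⟩ := hz
  obtain ⟨k₀, hk₀⟩ := id hKne
  set a2 : ℝ := (‖α‖)^2 with ha2def
  have ha2pos : 0 < a2 := pow_pos hα 2
  have ha2lt : a2 < 1 := pow_lt_one₀ (norm_nonneg α) hα1 (by norm_num)
  set r : ℝ := max a2 (1 - a2) with hrdef
  have hr0 : 0 < r := lt_max_of_lt_left ha2pos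
  have hr1 : r < 1 := max_lt ha2lt (by linarith)
  have hK1 : ∀ w ∈ K, F₁ w ∈ K := fun w hw => by
    rw [hK]; exact Or.inl ⟨w, hw, rfl⟩
  have hK2 : ∀ w ∈ K, F₂ w ∈ K := fun w hw => by
    rw [hK]; exact Or.inr ⟨w, hw, rfl⟩
  set C : ℝ := 1 + ‖k₀‖ with hCdef
  have hA : ((‖α‖ : ℂ))^2 = ((a2 : ℝ) : ℂ) := by push_cast [ha2def]; ring
  have key : ∀ n : ℕ, ∀ x : ℝ, x ∈ Icc (0:ℝ) 1 →
      Metric.infDist (x:ℂ) K ≤ r^n * C := by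
    intro n
    induction n with
    | zero =>
      intro x hx
      have h1 : Metric.infDist (x:ℂ) K ≤ dist (x:ℂ) k₀ :=
        Metric.infDist_le_dist_of_mem hk₀
      have h2 : dist (x:ℂ) k₀ ≤ 1 + ‖k₀‖ := by
        rw [Complex.dist_eq]
        calc ‖(x:ℂ) - k₀‖ ≤ ‖(x:ℂ)‖ + ‖k₀‖ := by
              simpa using norm_sub_le (x:ℂ) k₀ -- may need abs_sub
          _ ≤ 1 + ‖k₀‖ := by
              have : ‖(x:ℂ)‖ ≤ 1 := by
                rw [Complex.norm_real, Real.norm_of_nonneg hx.1]; exact hx.2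
              linarith
      simpa [hCdef] using h1.trans h2
    | succ n ih =>
      intro x hx
      by_cases hc : x ≤ a2
      · set y := x / a2 with hydef
        have hy : y ∈ Icc (0:ℝ) 1 :=
          ⟨div_nonneg hx.1 ha2pos.le, (div_le_one ha2pos).2 hc⟩
        obtain ⟨k, hk, hdk⟩ := hKc.exists_infDist_eq_dist hKne (y:ℂ)
        have hkK : F₁ (F₁ k) ∈ K := hK1 _ (hK1 _ hk)
        have hFF : F₁ (F₁ k) = ((a2:ℝ):ℂ) * k := by
          rw [hF₁, hF₁, map_mul, Complex.conj_conj, ← mul_assoc, Complex.mul_conj]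
          simp [ha2def, Complex.sq_norm]
        have hx' : (x:ℂ) = ((a2:ℝ):ℂ) * (y:ℂ) := by
          have hne : ((a2:ℝ):ℂ) ≠ 0 := by exact_mod_cast ha2pos.ne'
          rw [hydef]; push_cast; field_simp
        have hd : dist (x:ℂ) (F₁ (F₁ k)) = a2 * dist (y:ℂ) k := by
          rw [hFF, hx', Complex.dist_eq, Complex.dist_eq, ← mul_sub, norm_mul,
            Complex.norm_real, Real.norm_of_nonneg ha2pos.le]
        calc Metric.infDist (x:ℂ) K ≤ dist (x:ℂ) (F₁ (F₁ k)) :=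
              Metric.infDist_le_dist_of_mem hkK
          _ = a2 * dist (y:ℂ) k := hd
          _ ≤ r * (r^n * C) := by
              have h1 : dist (y:ℂ) k ≤ r^n * C := hdk ▸ ih y hy
              exact mul_le_mul (le_max_left _ _) h1 dist_nonneg hr0.le
          _ = r^(n+1) * C := by ring
      · push_neg at hc
        set y := (x - a2) / (1 - a2) with hydef
        have h1a : (0:ℝ) < 1 - a2 := by linarith
        have hy : y ∈ Icc (0:ℝ) 1 :=
          ⟨div_nonneg (by linarith) h1a.le, (div_le_one h1a).2 (by linarith [hx.2])⟩
        obtain ⟨k, hk, hdk⟩ := hKc.exists_infDist_eq_dist hKne (y:ℂ)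
        have hkK : F₂ k ∈ K := hK2 _ hk
        have hx' : (x:ℂ) = (1 - ((a2:ℝ):ℂ)) * (y:ℂ) + ((a2:ℝ):ℂ) := by
          have hne : (1:ℂ) - ((a2:ℝ):ℂ) ≠ 0 := by
            rw [show (1:ℂ) - ((a2:ℝ):ℂ) = (((1 - a2 : ℝ)):ℂ) by push_cast; ring]
            exact_mod_cast h1a.ne'
          rw [hydef]; push_cast; field_simp; ring
        have hd : dist (x:ℂ) (F₂ k) = (1 - a2) * dist (y:ℂ) k := by
          rw [hF₂, hA, hx', Complex.dist_eq, Complex.dist_eq]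
          have e : (1 - ((a2:ℝ):ℂ)) * (y:ℂ) + ((a2:ℝ):ℂ) -
              ((1 - ((a2:ℝ):ℂ)) * (starRingEnd ℂ) k + ((a2:ℝ):ℂ)) =
              (1 - ((a2:ℝ):ℂ)) * ((y:ℂ) - (starRingEnd ℂ) k) := by ring
          rw [e, norm_mul]
          have e1 : ‖1 - ((a2:ℝ):ℂ)‖ = 1 - a2 := by
            rw [show (1 - ((a2:ℝ):ℂ)) = (((1 - a2 : ℝ)):ℂ) by push_cast; ring,
              Complex.norm_real, Real.norm_of_nonneg h1a.le]
          have e2 : ‖(y:ℂ) - (starRingEnd ℂ) k‖ =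
              ‖(y:ℂ) - k‖ := by
            rw [← Complex.norm_conj, map_sub, Complex.conj_conj, Complex.conj_ofReal]
          rw [e1, e2]
        calc Metric.infDist (x:ℂ) K ≤ dist (x:ℂ) (F₂ k) :=
              Metric.infDist_le_dist_of_mem hkK
          _ = (1 - a2) * dist (y:ℂ) k := hd
          _ ≤ r * (r^n * C) := by
              have h1 : dist (y:ℂ) k ≤ r^n * C := hdk ▸ ih y hy
              exact mul_le_mul (le_max_right _ _) h1 dist_nonneg hr0.le
          _ = r^(n+1) * C := by ring
  have h0 : Metric.infDist (x:ℂ) K = 0 := by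
    have hle : ∀ n, Metric.infDist (x:ℂ) K ≤ r^n * C := fun n => key n x hx
    have ht : Filter.Tendsto (fun n => r^n * C) Filter.atTop (nhds 0) := by
      simpa using (tendsto_pow_atTop_nhds_zero_of_lt_one hr0.le hr1).mul_const C
    exact le_antisymm (ge_of_tendsto' ht hle) Metric.infDist_nonneg
  exact (hKc.isClosed.mem_iff_infDist_zero hKne).2 h0
end

section
/- The function f : [0,1] → ℝ satisfying f(a·t) = θ·f(t) and f(a + (1−a)t) = (1−θ)·f(t) + θ for all t ∈ [0,1], with f(0)=0, f(1)=1, f continuous, is strictly increasing. -/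
open Set

theorem stmt_12 (a θ : ℝ) (ha : a ∈ Ioo (0:ℝ) 1) (hθ : θ ∈ Ioo (0:ℝ) 1)
    (f : ℝ → ℝ) (hf0 : f 0 = 0) (hf1 : f 1 = 1)
    (hcont : ContinuousOn f (Icc 0 1))
    (heq1 : ∀ t ∈ Icc (0:ℝ) 1, f (a * t) = θ * f t)
    (heq2 : ∀ t ∈ Icc (0:ℝ) 1, f (a + (1 - a) * t) = (1 - θ) * f t + θ) :
    StrictMonoOn f (Icc 0 1) := by
  obtain ⟨ha0, ha1⟩ := ha
  obtain ⟨hθ0, hθ1⟩ := hθ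
  have h0mem : (0:ℝ) ∈ Icc (0:ℝ) 1 := ⟨le_refl 0, by norm_num⟩
  have h1a : (0:ℝ) < 1 - a := by linarith
  have hane : (1:ℝ) - a ≠ 0 := ne_of_gt h1a
  have h1mem : (1:ℝ) ∈ Icc (0:ℝ) 1 := ⟨by norm_num, le_refl 1⟩
  -- upper bound f ≤ 1
  have hub : ∀ t ∈ Icc (0:ℝ) 1, f t ≤ 1 := by
    obtain ⟨x0, hx0, hmax⟩ := isCompact_Icc.exists_isMaxOn ⟨0, h0mem⟩ hcont
    have hM1 : 1 ≤ f x0 := by rw [← hf1]; exact hmax h1mem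
    rcases le_or_gt x0 a with hc | hc
    · exfalso
      have hs : x0 / a ∈ Icc (0:ℝ) 1 := ⟨div_nonneg hx0.1 ha0.le, by
        rw [div_le_one ha0]; linarith⟩
      have hx : a * (x0 / a) = x0 := by field_simp
      have := heq1 _ hs
      rw [hx] at this
      have h2 : f (x0 / a) ≤ f x0 := hmax hs
      nlinarith
    · have hs : (x0 - a) / (1 - a) ∈ Icc (0:ℝ) 1 := by
        constructor
        · apply div_nonneg (by linarith) (by linarith)
        · rw [div_le_one (by linarith)]; linarith [hx0.2]
      have hx : a + (1 - a) * ((x0 - a) / (1 - a)) = x0 := by field_simp; ring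
      have h1 := heq2 _ hs
      rw [hx] at h1
      have h2 : f ((x0 - a) / (1 - a)) ≤ f x0 := hmax hs
      intro t ht
      have h3 : f t ≤ f x0 := hmax ht
      nlinarith [mul_le_mul_of_nonneg_left h2 (by linarith : (0:ℝ) ≤ 1 - θ)]
  -- lower bound 0 ≤ f
  have hlb : ∀ t ∈ Icc (0:ℝ) 1, 0 ≤ f t := by
    obtain ⟨x0, hx0, hmin⟩ := isCompact_Icc.exists_isMinOn ⟨0, h0mem⟩ hcont
    have hM0 : f x0 ≤ 0 := by rw [← hf0]; exact hmin h0mem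
    rcases le_or_gt x0 a with hc | hc
    · have hs : x0 / a ∈ Icc (0:ℝ) 1 := ⟨div_nonneg hx0.1 ha0.le, by
        rw [div_le_one ha0]; linarith⟩
      have hx : a * (x0 / a) = x0 := by field_simp
      have h1 := heq1 _ hs
      rw [hx] at h1
      have h2 : f x0 ≤ f (x0 / a) := hmin hs
      intro t ht
      have h3 : f x0 ≤ f t := hmin ht
      nlinarith [mul_le_mul_of_nonneg_left h2 hθ0.le]
    · exfalso
      have hs : (x0 - a) / (1 - a) ∈ Icc (0:ℝ) 1 := by
        constructor
        · apply div_nonneg (by linarith) (by linarith)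
        · rw [div_le_one (by linarith)]; linarith [hx0.2]
      have hx : a + (1 - a) * ((x0 - a) / (1 - a)) = x0 := by field_simp; ring
      have h1 := heq2 _ hs
      rw [hx] at h1
      have h2 : f x0 ≤ f ((x0 - a) / (1 - a)) := hmin hs
      nlinarith
  -- positivity : a^n ≤ t → 0 < f t
  have hA : ∀ n : ℕ, ∀ t ∈ Icc (0:ℝ) 1, a ^ n ≤ t → 0 < f t := by
    intro n
    induction n with
    | zero =>
      intro t ht h
      have : t = 1 := le_antisymm ht.2 (by simpa using h)
      rw [this, hf1]; norm_num
    | succ n ih =>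
      intro t ht h
      rcases le_or_gt a t with hc | hc
      · have hs : (t - a) / (1 - a) ∈ Icc (0:ℝ) 1 := by
          constructor
          · apply div_nonneg (by linarith) (by linarith)
          · rw [div_le_one (by linarith)]; linarith [ht.2]
        have hx : a + (1 - a) * ((t - a) / (1 - a)) = t := by field_simp; ring
        have h1 := heq2 _ hs
        rw [hx] at h1
        have := hlb _ hs
        nlinarith
      · have hs : t / a ∈ Icc (0:ℝ) 1 := ⟨div_nonneg ht.1 ha0.le, by
          rw [div_le_one ha0]; linarith⟩
        have hx : a * (t / a) = t := by field_simp
        have h1 := heq1 _ hs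
        rw [hx] at h1
        have h2 : a ^ n ≤ t / a := by
          rw [le_div_iff₀ ha0]
          calc a ^ n * a = a ^ (n + 1) := by ring
          _ ≤ t := h
        have := ih _ hs h2
        nlinarith
  -- strict upper : t ≤ 1 - (1-a)^n → f t < 1
  have hB : ∀ n : ℕ, ∀ t ∈ Icc (0:ℝ) 1, t ≤ 1 - (1 - a) ^ n → f t < 1 := by
    intro n
    induction n with
    | zero =>
      intro t ht h
      have : t = 0 := le_antisymm (by simpa using h) ht.1
      rw [this, hf0]; norm_num
    | succ n ih =>
      intro t ht h
      rcases le_or_gt t a with hc | hc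
      · have hs : t / a ∈ Icc (0:ℝ) 1 := ⟨div_nonneg ht.1 ha0.le, by
          rw [div_le_one ha0]; linarith⟩
        have hx : a * (t / a) = t := by field_simp
        have h1 := heq1 _ hs
        rw [hx] at h1
        have := hub _ hs
        nlinarith
      · have hs : (t - a) / (1 - a) ∈ Icc (0:ℝ) 1 := by
          constructor
          · apply div_nonneg (by linarith) (by linarith)
          · rw [div_le_one (by linarith)]; linarith [ht.2]
        have hx : a + (1 - a) * ((t - a) / (1 - a)) = t := by field_simp; ring
        have h1 := heq2 _ hs
        rw [hx] at h1
        have h2 : (t - a) / (1 - a) ≤ 1 - (1 - a) ^ n := by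
          rw [div_le_iff₀ (by linarith)]
          have : (1 - a) ^ (n + 1) = (1 - a) ^ n * (1 - a) := by ring
          nlinarith [pow_nonneg (by linarith : (0:ℝ) ≤ 1 - a) n]
        have := ih _ hs h2
        nlinarith
  -- main induction on scale
  set c : ℝ := max a (1 - a) with hc_def
  have hcpos : 0 < c := lt_max_of_lt_left ha0
  have hc1 : c < 1 := max_lt ha1 (by linarith)
  have hac : a ≤ c := le_max_left _ _
  have hbc : 1 - a ≤ c := le_max_right _ _
  have key : ∀ n : ℕ, ∀ x ∈ Icc (0:ℝ) 1, ∀ y ∈ Icc (0:ℝ) 1,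
      x < y → c ^ n ≤ y - x → f x < f y := by
    intro n
    induction n with
    | zero =>
      intro x hx y hy hxy h
      simp only [pow_zero] at h
      have hx0 : x = 0 := le_antisymm (by linarith [hy.2]) hx.1
      have hy1 : y = 1 := le_antisymm hy.2 (by linarith [hx.1])
      rw [hx0, hy1, hf0, hf1]; norm_num
    | succ n ih =>
      intro x hx y hy hxy h
      rcases le_or_gt y a with hcy | hcy
      · -- both in [0, a]
        have hxs : x / a ∈ Icc (0:ℝ) 1 := ⟨div_nonneg hx.1 ha0.le, by
          rw [div_le_one ha0]; linarith⟩
        have hys : y / a ∈ Icc (0:ℝ) 1 := ⟨div_nonneg hy.1 ha0.le, by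
          rw [div_le_one ha0]; linarith⟩
        have e1 : a * (x / a) = x := by field_simp
        have e2 : a * (y / a) = y := by field_simp
        have f1 := heq1 _ hxs; rw [e1] at f1
        have f2 := heq1 _ hys; rw [e2] at f2
        have hlt : x / a < y / a := div_lt_div_of_pos_right hxy ha0
        have hgap : c ^ n ≤ y / a - x / a := by
          rw [div_sub_div_same, le_div_iff₀ ha0]
          calc c ^ n * a ≤ c ^ n * c := by
                apply mul_le_mul_of_nonneg_left hac (pow_nonneg hcpos.le n)
          _ = c ^ (n + 1) := by ring
          _ ≤ y - x := h
        have := ih _ hxs _ hys hlt hgap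
        nlinarith
      rcases le_or_gt a x with hcx | hcx
      · -- both in [a, 1]
        have hxs : (x - a) / (1 - a) ∈ Icc (0:ℝ) 1 := by
          constructor
          · apply div_nonneg (by linarith) (by linarith)
          · rw [div_le_one (by linarith)]; linarith [hx.2]
        have hys : (y - a) / (1 - a) ∈ Icc (0:ℝ) 1 := by
          constructor
          · apply div_nonneg (by linarith) (by linarith)
          · rw [div_le_one (by linarith)]; linarith [hy.2]
        have e1 : a + (1 - a) * ((x - a) / (1 - a)) = x := by field_simp; ring
        have e2 : a + (1 - a) * ((y - a) / (1 - a)) = y := by field_simp; ring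
        have f1 := heq2 _ hxs; rw [e1] at f1
        have f2 := heq2 _ hys; rw [e2] at f2
        have hlt : (x - a) / (1 - a) < (y - a) / (1 - a) := by
          apply div_lt_div_of_pos_right (by linarith) (by linarith)
        have hgap : c ^ n ≤ (y - a) / (1 - a) - (x - a) / (1 - a) := by
          rw [div_sub_div_same, le_div_iff₀ (by linarith : (0:ℝ) < 1 - a)]
          calc c ^ n * (1 - a) ≤ c ^ n * c := by
                apply mul_le_mul_of_nonneg_left hbc (pow_nonneg hcpos.le n)
          _ = c ^ (n + 1) := by ring
          _ ≤ y - a - (x - a) := by linarith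
        have := ih _ hxs _ hys hlt hgap
        nlinarith
      · -- x < a < y : show f x < θ < f y
        have hxs : x / a ∈ Icc (0:ℝ) 1 := ⟨div_nonneg hx.1 ha0.le, by
          rw [div_le_one ha0]; linarith⟩
        have hys : (y - a) / (1 - a) ∈ Icc (0:ℝ) 1 := by
          constructor
          · apply div_nonneg (by linarith) (by linarith)
          · rw [div_le_one (by linarith)]; linarith [hy.2]
        have e1 : a * (x / a) = x := by field_simp
        have e2 : a + (1 - a) * ((y - a) / (1 - a)) = y := by field_simp; ring
        have f1 := heq1 _ hxs; rw [e1] at f1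
        have f2 := heq2 _ hys; rw [e2] at f2
        -- f (x/a) < 1 since x/a < 1
        have hxlt1 : x / a < 1 := by rw [div_lt_one ha0]; exact hcx
        obtain ⟨m, hm⟩ := exists_pow_lt_of_lt_one (by linarith : (0:ℝ) < 1 - x / a)
          (by linarith : 1 - a < 1)
        have hfx1 : f (x / a) < 1 := hB m _ hxs (by linarith)
        -- f ((y-a)/(1-a)) > 0 since (y-a)/(1-a) > 0
        have hypos : 0 < (y - a) / (1 - a) := div_pos (by linarith) (by linarith)
        obtain ⟨k, hk⟩ := exists_pow_lt_of_lt_one hypos ha1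
        have hfy0 : 0 < f ((y - a) / (1 - a)) := hA k _ hys hk.le
        nlinarith
  intro x hx y hy hxy
  obtain ⟨n, hn⟩ := exists_pow_lt_of_lt_one (by linarith : (0:ℝ) < y - x) hc1
  exact key n x hx y hy hxy hn.le
end

section
/- If θ = a (i.e., 1/h² = |α|²), then the unique continuous solution of f(a·t) = θ·f(t), f(a + (1−a)t) = (1−θ)f(t) + θ, f(0)=0, f(1)=1 is the identity: f(x) = x for all x ∈ [0,1]. -/
open Set

theorem stmt_13 (a θ : ℝ) (ha : a ∈ Ioo (0:ℝ) 1) (hθa : θ = a)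
    (f : ℝ → ℝ) (hf0 : f 0 = 0) (hf1 : f 1 = 1)
    (hcont : ContinuousOn f (Icc 0 1))
    (heq1 : ∀ t ∈ Icc (0:ℝ) 1, f (a * t) = θ * f t)
    (heq2 : ∀ t ∈ Icc (0:ℝ) 1, f (a + (1 - a) * t) = (1 - θ) * f t + θ) :
    ∀ x ∈ Icc (0:ℝ) 1, f x = x := by
  obtain ⟨ha0, ha1⟩ := ha
  rw [hθa] at heq1 heq2
  set g : ℝ → ℝ := fun x => |f x - x| with hg
  have hgnn : ∀ x, 0 ≤ g x := fun x => abs_nonneg _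
  have hgc : ContinuousOn g (Icc 0 1) := (hcont.sub continuousOn_id).abs
  obtain ⟨x₀, hx₀, hmax⟩ :=
    (isCompact_Icc (a := (0:ℝ)) (b := 1)).exists_isMaxOn (nonempty_Icc.2 zero_le_one) hgc
  have hc1 : max a (1 - a) < 1 := by
    apply max_lt ha1; linarith
  have h0 : g x₀ ≤ max a (1 - a) * g x₀ := by
    rcases le_or_gt x₀ a with h | h
    · have ht : x₀ / a ∈ Icc (0:ℝ) 1 := ⟨div_nonneg hx₀.1 ha0.le, (div_le_one ha0).2 h⟩
      have hx : a * (x₀ / a) = x₀ := by field_simp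
      have hgx : g x₀ = a * g (x₀ / a) := by
        have hf := heq1 _ ht
        rw [hx] at hf
        have hd : f x₀ - x₀ = a * (f (x₀ / a) - x₀ / a) := by
          rw [hf]; field_simp
        simp only [hg]
        rw [hd, abs_mul, abs_of_pos ha0]
      calc g x₀ = a * g (x₀ / a) := hgx
        _ ≤ max a (1 - a) * g x₀ :=
            mul_le_mul (le_max_left _ _) (hmax ht) (hgnn _)
              (le_trans ha0.le (le_max_left _ _))
    · have h1a : (0:ℝ) < 1 - a := by linarith
      have ht : (x₀ - a) / (1 - a) ∈ Icc (0:ℝ) 1 := by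
        constructor
        · exact div_nonneg (by linarith) h1a.le
        · rw [div_le_one h1a]; linarith [hx₀.2]
      have hx : a + (1 - a) * ((x₀ - a) / (1 - a)) = x₀ := by field_simp; ring
      have hgx : g x₀ = (1 - a) * g ((x₀ - a) / (1 - a)) := by
        have hf := heq2 _ ht
        rw [hx] at hf
        have hd : f x₀ - x₀ = (1 - a) * (f ((x₀ - a) / (1 - a)) - (x₀ - a) / (1 - a)) := by
          rw [hf]; field_simp; ring
        simp only [hg]
        rw [hd, abs_mul, abs_of_pos h1a]
      calc g x₀ = (1 - a) * g ((x₀ - a) / (1 - a)) := hgx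
        _ ≤ max a (1 - a) * g x₀ :=
            mul_le_mul (le_max_right _ _) (hmax ht) (hgnn _)
              (le_trans h1a.le (le_max_right _ _))
  have hg0 : g x₀ = 0 := by nlinarith [hgnn x₀]
  intro x hx
  have : g x = 0 := le_antisymm (hg0 ▸ hmax hx) (hgnn x)
  have := abs_eq_zero.mp this
  linarith
end

section
/- If θ ≠ a, then the unique continuous increasing solution f of f(a·t)=θf(t), f(a+(1−a)t)=(1−θ)f(t)+θ, f(0)=0, f(1)=1 is singular: f is differentiable with f'(x)=0 at Lebesgue-almost every x ∈ [0,1]. -/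
open Set MeasureTheory

lemma qmp_affine (p c : ℝ) (hc : c ≠ 0) :
    Measure.QuasiMeasurePreserving (fun x => p + c * x) volume volume := by
  refine ⟨(measurable_const_mul c).const_add p, ?_⟩
  have h1 : (fun x : ℝ => p + c * x) = (fun x => p + x) ∘ (fun x => c * x) := rfl
  rw [h1, ← Measure.map_map (measurable_const_add p) (measurable_const_mul c),
    Real.map_volume_mul_left hc, Measure.map_smul, map_add_left_eq_self]
  intro s hs
  simp [Measure.smul_apply, hs]

lemma lint_affine (p c : ℝ) (hc : 0 < c) (g : ℝ → ENNReal) (hg : Measurable g) :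
    ∫⁻ x, g (p + c * x) ∂volume = ENNReal.ofReal c⁻¹ * ∫⁻ x, g x ∂volume := by
  have hmap : Measure.map (fun x : ℝ => p + c * x) volume
      = ENNReal.ofReal c⁻¹ • volume := by
    have h1 : (fun x : ℝ => p + c * x) = (fun x => p + x) ∘ (fun x => c * x) := rfl
    rw [h1, ← Measure.map_map (measurable_const_add p) (measurable_const_mul c),
      Real.map_volume_mul_left hc.ne', Measure.map_smul, map_add_left_eq_self,
      abs_inv, abs_of_pos hc]
  rw [← lintegral_map hg ((measurable_const_mul c).const_add p), hmap,
    lintegral_smul_measure, smul_eq_mul]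

lemma coeff_lt_one (a θ : ℝ) (ha : a ∈ Ioo (0:ℝ) 1) (hθ : θ ∈ Ioo (0:ℝ) 1) (hne : θ ≠ a) :
    Real.sqrt (a * θ) + Real.sqrt ((1 - a) * (1 - θ)) < 1 := by
  obtain ⟨ha0, ha1⟩ := ha; obtain ⟨hθ0, hθ1⟩ := hθ
  set u := Real.sqrt (a * θ) with hu
  set v := Real.sqrt ((1 - a) * (1 - θ)) with hv
  set s := Real.sqrt (a * (1 - θ)) with hs
  set t := Real.sqrt (θ * (1 - a)) with ht
  have hu2 : u ^ 2 = a * θ := Real.sq_sqrt (by positivity)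
  have hv2 : v ^ 2 = (1 - a) * (1 - θ) := Real.sq_sqrt (by nlinarith)
  have hs2 : s ^ 2 = a * (1 - θ) := Real.sq_sqrt (by nlinarith)
  have ht2 : t ^ 2 = θ * (1 - a) := Real.sq_sqrt (by nlinarith)
  have hun : 0 ≤ u := Real.sqrt_nonneg _
  have hvn : 0 ≤ v := Real.sqrt_nonneg _
  have huv : u * v = s * t := by
    rw [hu, hv, hs, ht, ← Real.sqrt_mul (by positivity), ← Real.sqrt_mul (by nlinarith)]
    ring_nf
  have hstne : s ≠ t := by
    intro h
    have : a * (1 - θ) = θ * (1 - a) := by rw [← hs2, ← ht2, h]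
    apply hne; nlinarith
  have hst : 0 < (s - t) ^ 2 :=
    lt_of_le_of_ne (sq_nonneg _) (Ne.symm (pow_ne_zero 2 (sub_ne_zero.mpr hstne)))
  have h1 : (u + v) ^ 2 < 1 := by nlinarith
  nlinarith

theorem stmt_14 (a θ : ℝ) (ha : a ∈ Ioo (0:ℝ) 1) (hθ : θ ∈ Ioo (0:ℝ) 1) (hne : θ ≠ a)
    (f : ℝ → ℝ) (hf0 : f 0 = 0) (hf1 : f 1 = 1)
    (hcont : ContinuousOn f (Icc 0 1)) (hmono : MonotoneOn f (Icc 0 1))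
    (heq1 : ∀ t ∈ Icc (0:ℝ) 1, f (a * t) = θ * f t)
    (heq2 : ∀ t ∈ Icc (0:ℝ) 1, f (a + (1 - a) * t) = (1 - θ) * f t + θ) :
    ∀ᵐ x ∂(volume.restrict (Icc (0:ℝ) 1)), HasDerivAt f 0 x := by
  obtain ⟨ha0, ha1⟩ := ha
  obtain ⟨hθ0, hθ1⟩ := hθ
  have ha1' : (0:ℝ) < 1 - a := by linarith
  -- the monotone extension of f to ℝ
  set F : ℝ → ℝ := fun x => f (max 0 (min 1 x)) with hFdef
  have hFmem : ∀ x : ℝ, max 0 (min 1 x) ∈ Icc (0:ℝ) 1 :=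
    fun x => ⟨le_max_left _ _, max_le zero_le_one (min_le_left _ _)⟩
  have hF : Monotone F := fun x y h =>
    hmono (hFmem x) (hFmem y) (max_le_max le_rfl (min_le_min le_rfl h))
  have hFeq : ∀ x ∈ Icc (0:ℝ) 1, F x = f x := by
    intro x hx
    simp only [hFdef, min_eq_right hx.2, max_eq_right hx.1]
  -- functional equations for F
  have hFeq1 : ∀ y : ℝ, y ≤ a → F y = θ * F (y / a) := by
    intro y hy
    rcases le_or_gt y 0 with h0 | h0
    · have hya : y / a ≤ 0 := div_nonpos_of_nonpos_of_nonneg h0 ha0.le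
      have e1 : F y = 0 := by
        simp only [hFdef, min_eq_right (h0.trans zero_le_one), max_eq_left h0, hf0]
      have e2 : F (y / a) = 0 := by
        simp only [hFdef, min_eq_right (hya.trans zero_le_one), max_eq_left hya, hf0]
      rw [e1, e2, mul_zero]
    · have hy1 : y ∈ Icc (0:ℝ) 1 := ⟨h0.le, hy.trans ha1.le⟩
      have hta : y / a ∈ Icc (0:ℝ) 1 :=
        ⟨div_nonneg h0.le ha0.le, (div_le_one ha0).2 hy⟩
      rw [hFeq y hy1, hFeq _ hta, ← heq1 _ hta]
      congr 1
      field_simp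
  have hFeq2 : ∀ y : ℝ, a ≤ y → F y = (1 - θ) * F ((y - a) / (1 - a)) + θ := by
    intro y hy
    rcases le_or_gt y 1 with h1 | h1
    · have hy1 : y ∈ Icc (0:ℝ) 1 := ⟨ha0.le.trans hy, h1⟩
      have hta : (y - a) / (1 - a) ∈ Icc (0:ℝ) 1 :=
        ⟨div_nonneg (by linarith) ha1'.le, (div_le_one ha1').2 (by linarith)⟩
      rw [hFeq y hy1, hFeq _ hta, ← heq2 _ hta]
      congr 1
      field_simp
      ring
    · have hya : (1:ℝ) ≤ (y - a) / (1 - a) := (le_div_iff₀ ha1').2 (by linarith)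
      have e1 : F y = 1 := by
        simp only [hFdef, min_eq_left h1.le, max_eq_right zero_le_one, hf1]
      have e2 : F ((y - a) / (1 - a)) = 1 := by
        simp only [hFdef, min_eq_left hya, max_eq_right zero_le_one, hf1]
      rw [e1, e2]; ring
  -- the derivative
  set μ := hF.stieltjesFunction.measure with hμdef
  set D : ℝ → ℝ := fun x => (μ.rnDeriv volume x).toReal with hDdef
  have hD : ∀ᵐ x, HasDerivAt F (D x) x := hF.ae_hasDerivAt
  have hDmeas : Measurable D := (Measure.measurable_rnDeriv μ volume).ennreal_toReal
  have hDnn : ∀ x, 0 ≤ D x := fun x => ENNReal.toReal_nonneg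
  -- functional equation for D on (0, a)
  have h0a : ∀ᵐ x : ℝ, x ∈ Ioo 0 a → D x = θ / a * D (x / a) := by
    have h2 : ∀ᵐ x : ℝ, HasDerivAt F (D (x / a)) (x / a) := by
      have h3 := (qmp_affine 0 a⁻¹ (inv_ne_zero ha0.ne')).ae hD
      simpa [zero_add, inv_mul_eq_div] using h3
    filter_upwards [hD, h2] with x hx hx2 hxa
    have hev : F =ᶠ[nhds x] fun y => θ * F (y / a) := by
      filter_upwards [Iio_mem_nhds hxa.2] with y hy
      exact hFeq1 y hy.le
    have hd1 : HasDerivAt (F ∘ fun y : ℝ => y / a) (D (x / a) * a⁻¹) x := by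
      have hg : HasDerivAt (fun y : ℝ => y / a) a⁻¹ x := by
        simpa [one_div] using (hasDerivAt_id x).div_const a
      exact HasDerivAt.comp x hx2 hg
    have hd2 : HasDerivAt F (θ * (D (x / a) * a⁻¹)) x :=
      (hd1.const_mul θ).congr_of_eventuallyEq hev
    have := hx.unique hd2
    rw [this]; field_simp
  -- functional equation for D on (a, 1)
  have ha1'' : ∀ᵐ x : ℝ, x ∈ Ioo a 1 → D x = (1 - θ) / (1 - a) * D ((x - a) / (1 - a)) := by
    have key : ∀ x : ℝ, -(a / (1 - a)) + (1 - a)⁻¹ * x = (x - a) / (1 - a) := by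
      intro x; field_simp; ring
    have h2 : ∀ᵐ x : ℝ, HasDerivAt F (D ((x - a) / (1 - a))) ((x - a) / (1 - a)) := by
      have h3 := (qmp_affine (-(a / (1 - a))) (1 - a)⁻¹ (inv_ne_zero ha1'.ne')).ae hD
      simpa [key] using h3
    filter_upwards [hD, h2] with x hx hx2 hxa
    have hev : F =ᶠ[nhds x] fun y => (1 - θ) * F ((y - a) / (1 - a)) + θ := by
      filter_upwards [Ioi_mem_nhds hxa.1] with y hy
      exact hFeq2 y hy.le
    have hd1 : HasDerivAt (F ∘ fun y : ℝ => (y - a) / (1 - a))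
        (D ((x - a) / (1 - a)) * (1 - a)⁻¹) x := by
      have hg : HasDerivAt (fun y : ℝ => (y - a) / (1 - a)) (1 - a)⁻¹ x := by
        simpa [one_div] using ((hasDerivAt_id x).sub_const a).div_const (1 - a)
      exact HasDerivAt.comp x hx2 hg
    have hd2 : HasDerivAt F ((1 - θ) * (D ((x - a) / (1 - a)) * (1 - a)⁻¹)) x :=
      (((hd1.const_mul (1 - θ))).add_const θ).congr_of_eventuallyEq hev
    have := hx.unique hd2
    rw [this]; field_simp
  -- the sqrt density
  set G : ℝ → ENNReal := fun x => ENNReal.ofReal (Real.sqrt (D x)) with hGdef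
  have hGmeas : Measurable G := (Real.continuous_sqrt.measurable.comp hDmeas).ennreal_ofReal
  set I := ∫⁻ x in Ioo (0:ℝ) 1, G x ∂volume with hIdef
  -- finiteness of I
  have hIfin : I ≠ ⊤ := by
    have hb : ∀ x, G x ≤ 1 + μ.rnDeriv volume x := by
      intro x
      have h1 : Real.sqrt (D x) ≤ 1 + D x := by
        nlinarith [Real.sq_sqrt (hDnn x), Real.sqrt_nonneg (D x),
          sq_nonneg (Real.sqrt (D x) - 1)]
      calc G x ≤ ENNReal.ofReal (1 + D x) := ENNReal.ofReal_le_ofReal h1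
        _ = ENNReal.ofReal 1 + ENNReal.ofReal (D x) := ENNReal.ofReal_add zero_le_one (hDnn x)
        _ ≤ 1 + μ.rnDeriv volume x := by
            rw [ENNReal.ofReal_one]
            exact add_le_add le_rfl ENNReal.ofReal_toReal_le
    have h2 : I ≤ ∫⁻ x in Ioo (0:ℝ) 1, (1 + μ.rnDeriv volume x) ∂volume :=
      lintegral_mono hb
    have h3 : ∫⁻ x in Ioo (0:ℝ) 1, (1 + μ.rnDeriv volume x) ∂volume
        = volume (Ioo (0:ℝ) 1) + ∫⁻ x in Ioo (0:ℝ) 1, μ.rnDeriv volume x ∂volume := by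
      rw [lintegral_add_left measurable_const]
      simp
    have h4 : ∫⁻ x in Ioo (0:ℝ) 1, μ.rnDeriv volume x ∂volume ≤ μ (Ioo 0 1) :=
      Measure.setLIntegral_rnDeriv_le _
    have h5 : μ (Ioo 0 1) ≤ μ (Ioc (-1 : ℝ) 1) :=
      measure_mono (fun x hx => ⟨by linarith [hx.1], hx.2.le⟩)
    have h6 : μ (Ioc (-1 : ℝ) 1) < ⊤ := by
      rw [hμdef, StieltjesFunction.measure_Ioc]
      exact ENNReal.ofReal_lt_top
    have h7 : I < ⊤ := by
      refine lt_of_le_of_lt (h2.trans (h3.le.trans (add_le_add le_rfl (h4.trans h5)))) ?_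
      exact ENNReal.add_lt_top.2 ⟨by simp [Real.volume_Ioo], h6⟩
    exact h7.ne
  -- substitution on the left piece
  have hkey0 : ∫⁻ x in Ioo (0:ℝ) a, G x ∂volume
      = ENNReal.ofReal (Real.sqrt (a * θ)) * I := by
    set g0 : ℝ → ENNReal := (Ioo (0:ℝ) a).indicator G with hg0
    have hg0meas : Measurable g0 := hGmeas.indicator measurableSet_Ioo
    have e1 : ∫⁻ x in Ioo (0:ℝ) a, G x ∂volume = ∫⁻ x, g0 x ∂volume :=
      (lintegral_indicator measurableSet_Ioo _).symm
    have e2 : ∫⁻ x, g0 (0 + a * x) ∂volume = ENNReal.ofReal a⁻¹ * ∫⁻ x, g0 x ∂volume :=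
      lint_affine 0 a ha0 g0 hg0meas
    have hmem : ∀ x : ℝ, a * x ∈ Ioo (0:ℝ) a ↔ x ∈ Ioo (0:ℝ) 1 := by
      intro x
      simp only [mem_Ioo]
      constructor
      · rintro ⟨h1, h2⟩
        exact ⟨by nlinarith, by nlinarith⟩
      · rintro ⟨h1, h2⟩
        exact ⟨by nlinarith, by nlinarith⟩
    have e3 : ∀ x : ℝ, g0 (0 + a * x) = (Ioo (0:ℝ) 1).indicator (fun t => G (a * t)) x := by
      intro x
      by_cases hx : x ∈ Ioo (0:ℝ) 1
      · rw [indicator_of_mem hx, hg0, zero_add, indicator_of_mem ((hmem x).2 hx)]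
      · rw [indicator_of_notMem hx, hg0, zero_add,
          indicator_of_notMem (fun h => hx ((hmem x).1 h))]
    have e4 : ∫⁻ x, g0 (0 + a * x) ∂volume = ∫⁻ x in Ioo (0:ℝ) 1, G (a * x) ∂volume := by
      rw [lintegral_congr e3, lintegral_indicator measurableSet_Ioo]
    have e5 : ∫⁻ x in Ioo (0:ℝ) 1, G (a * x) ∂volume
        = ENNReal.ofReal (Real.sqrt (θ / a)) * I := by
      have h6 : ∀ᵐ x : ℝ, a * x ∈ Ioo (0:ℝ) a → D (a * x) = θ / a * D (a * x / a) := by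
        have := (qmp_affine 0 a ha0.ne').ae h0a
        simpa [zero_add] using this
      have h7 : ∀ᵐ x : ℝ ∂(volume.restrict (Ioo (0:ℝ) 1)),
          G (a * x) = ENNReal.ofReal (Real.sqrt (θ / a)) * G x := by
        rw [ae_restrict_iff' measurableSet_Ioo]
        filter_upwards [h6] with x hx hx1
        have hd := hx ((hmem x).2 hx1)
        rw [mul_div_cancel_left₀ _ ha0.ne'] at hd
        show ENNReal.ofReal (Real.sqrt (D (a * x)))
            = ENNReal.ofReal (Real.sqrt (θ / a)) * ENNReal.ofReal (Real.sqrt (D x))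
        rw [hd, Real.sqrt_mul (by positivity), ENNReal.ofReal_mul (Real.sqrt_nonneg _)]
      rw [lintegral_congr_ae h7, lintegral_const_mul _ hGmeas]
    have hcomb : ∫⁻ x in Ioo (0:ℝ) a, G x ∂volume
        = ENNReal.ofReal a * (ENNReal.ofReal (Real.sqrt (θ / a)) * I) := by
      rw [e1]
      have h8 : ∫⁻ x, g0 x ∂volume = ENNReal.ofReal a * ∫⁻ x, g0 (0 + a * x) ∂volume := by
        rw [e2, ← mul_assoc, ← ENNReal.ofReal_mul ha0.le, mul_inv_cancel₀ ha0.ne',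
          ENNReal.ofReal_one, one_mul]
      rw [h8, e4, e5]
    have hid : a * Real.sqrt (θ / a) = Real.sqrt (a * θ) := by
      rw [Real.sqrt_div hθ0.le, Real.sqrt_mul ha0.le]
      have h2 : Real.sqrt a * Real.sqrt a = a := Real.mul_self_sqrt ha0.le
      have h3 : Real.sqrt a ≠ 0 := by positivity
      field_simp
      linear_combination -h2
    rw [hcomb, ← mul_assoc, ← ENNReal.ofReal_mul ha0.le, hid]
  -- substitution on the right piece
  have hkey1 : ∫⁻ x in Ioo a 1, G x ∂volume
      = ENNReal.ofReal (Real.sqrt ((1 - a) * (1 - θ))) * I := by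
    set g1 : ℝ → ENNReal := (Ioo a 1).indicator G with hg1
    have hg1meas : Measurable g1 := hGmeas.indicator measurableSet_Ioo
    have e1 : ∫⁻ x in Ioo a 1, G x ∂volume = ∫⁻ x, g1 x ∂volume :=
      (lintegral_indicator measurableSet_Ioo _).symm
    have e2 : ∫⁻ x, g1 (a + (1 - a) * x) ∂volume
        = ENNReal.ofReal (1 - a)⁻¹ * ∫⁻ x, g1 x ∂volume :=
      lint_affine a (1 - a) ha1' g1 hg1meas
    have hmem : ∀ x : ℝ, a + (1 - a) * x ∈ Ioo a 1 ↔ x ∈ Ioo (0:ℝ) 1 := by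
      intro x
      simp only [mem_Ioo]
      constructor
      · rintro ⟨h1, h2⟩
        exact ⟨by nlinarith, by nlinarith⟩
      · rintro ⟨h1, h2⟩
        exact ⟨by nlinarith, by nlinarith⟩
    have e3 : ∀ x : ℝ, g1 (a + (1 - a) * x)
        = (Ioo (0:ℝ) 1).indicator (fun t => G (a + (1 - a) * t)) x := by
      intro x
      by_cases hx : x ∈ Ioo (0:ℝ) 1
      · rw [indicator_of_mem hx, hg1, indicator_of_mem ((hmem x).2 hx)]
      · rw [indicator_of_notMem hx, hg1,
          indicator_of_notMem (fun h => hx ((hmem x).1 h))]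
    have e4 : ∫⁻ x, g1 (a + (1 - a) * x) ∂volume
        = ∫⁻ x in Ioo (0:ℝ) 1, G (a + (1 - a) * x) ∂volume := by
      rw [lintegral_congr e3, lintegral_indicator measurableSet_Ioo]
    have e5 : ∫⁻ x in Ioo (0:ℝ) 1, G (a + (1 - a) * x) ∂volume
        = ENNReal.ofReal (Real.sqrt ((1 - θ) / (1 - a))) * I := by
      have h6 : ∀ᵐ x : ℝ, a + (1 - a) * x ∈ Ioo a 1 →
          D (a + (1 - a) * x) = (1 - θ) / (1 - a) * D ((a + (1 - a) * x - a) / (1 - a)) :=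
        (qmp_affine a (1 - a) ha1'.ne').ae ha1''
      have h7 : ∀ᵐ x : ℝ ∂(volume.restrict (Ioo (0:ℝ) 1)),
          G (a + (1 - a) * x) = ENNReal.ofReal (Real.sqrt ((1 - θ) / (1 - a))) * G x := by
        rw [ae_restrict_iff' measurableSet_Ioo]
        filter_upwards [h6] with x hx hx1
        have hd := hx ((hmem x).2 hx1)
        rw [show (a + (1 - a) * x - a) / (1 - a) = x by field_simp; ring] at hd
        show ENNReal.ofReal (Real.sqrt (D (a + (1 - a) * x)))
            = ENNReal.ofReal (Real.sqrt ((1 - θ) / (1 - a))) * ENNReal.ofReal (Real.sqrt (D x))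
        rw [hd, Real.sqrt_mul (div_nonneg (by linarith) (by linarith)),
          ENNReal.ofReal_mul (Real.sqrt_nonneg _)]
      rw [lintegral_congr_ae h7, lintegral_const_mul _ hGmeas]
    have hcomb : ∫⁻ x in Ioo a 1, G x ∂volume
        = ENNReal.ofReal (1 - a) * (ENNReal.ofReal (Real.sqrt ((1 - θ) / (1 - a))) * I) := by
      rw [e1]
      have h8 : ∫⁻ x, g1 x ∂volume
          = ENNReal.ofReal (1 - a) * ∫⁻ x, g1 (a + (1 - a) * x) ∂volume := by
        rw [e2, ← mul_assoc, ← ENNReal.ofReal_mul ha1'.le, mul_inv_cancel₀ ha1'.ne',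
          ENNReal.ofReal_one, one_mul]
      rw [h8, e4, e5]
    have hid : (1 - a) * Real.sqrt ((1 - θ) / (1 - a)) = Real.sqrt ((1 - a) * (1 - θ)) := by
      rw [Real.sqrt_div (by linarith : (0:ℝ) ≤ 1 - θ), Real.sqrt_mul ha1'.le]
      have h2 : Real.sqrt (1 - a) * Real.sqrt (1 - a) = 1 - a := Real.mul_self_sqrt ha1'.le
      have h3 : Real.sqrt (1 - a) ≠ 0 := by positivity
      field_simp
      linear_combination -h2
    rw [hcomb, ← mul_assoc, ← ENNReal.ofReal_mul ha1'.le, hid]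
  -- split the integral
  have hsplit : I = ∫⁻ x in Ioo (0:ℝ) a, G x ∂volume + ∫⁻ x in Ioo a 1, G x ∂volume := by
    have hae : (Ioo (0:ℝ) 1 : Set ℝ) =ᵐ[volume] (Ioo 0 a ∪ Ioo a 1 : Set ℝ) := by
      refine ae_eq_set.2 ⟨measure_mono_null ?_ (Real.volume_singleton (a := a)), ?_⟩
      · rintro x ⟨⟨h1, h2⟩, hx⟩
        simp only [mem_union, mem_Ioo, not_or] at hx
        show x ∈ ({a} : Set ℝ)
        rcases lt_trichotomy x a with h | h | h
        · exact absurd ⟨h1, h⟩ hx.1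
        · exact h
        · exact absurd ⟨h, h2⟩ hx.2
      · rw [diff_eq_empty.2 (union_subset (Ioo_subset_Ioo le_rfl ha1.le)
          (Ioo_subset_Ioo ha0.le le_rfl))]
        exact measure_empty
    have hdisj : Disjoint (Ioo (0:ℝ) a) (Ioo a 1) :=
      Set.disjoint_left.2 (fun x h1 h2 => absurd h1.2 (not_lt.2 h2.1.le))
    rw [hIdef, setLIntegral_congr hae, lintegral_union measurableSet_Ioo hdisj]
  -- the contraction identity
  have hI : I = ENNReal.ofReal (Real.sqrt (a * θ) + Real.sqrt ((1 - a) * (1 - θ))) * I := by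
    rw [ENNReal.ofReal_add (Real.sqrt_nonneg _) (Real.sqrt_nonneg _), add_mul,
      ← hkey0, ← hkey1]
    exact hsplit
  have hI0 : I = 0 := by
    by_contra h
    have hlt : ENNReal.ofReal (Real.sqrt (a * θ) + Real.sqrt ((1 - a) * (1 - θ))) < 1 :=
      ENNReal.ofReal_lt_one.2 (coeff_lt_one a θ ⟨ha0, ha1⟩ ⟨hθ0, hθ1⟩ hne)
    have : I < I := by
      calc I = ENNReal.ofReal (Real.sqrt (a * θ) + Real.sqrt ((1 - a) * (1 - θ))) * I := hI
        _ < 1 * I := by rw [mul_comm _ I, mul_comm 1 I]; exact ENNReal.mul_lt_mul_right h hIfin hlt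
        _ = I := one_mul I
    exact absurd this (lt_irrefl I)
  -- D = 0 a.e. on (0,1)
  have hDzero : ∀ᵐ x : ℝ, x ∈ Ioo (0:ℝ) 1 → D x = 0 := by
    have h := (lintegral_eq_zero_iff hGmeas).1 (hIdef ▸ hI0)
    rw [Filter.EventuallyEq, ae_restrict_iff' measurableSet_Ioo] at h
    filter_upwards [h] with x hx hx1
    have hG0 : ENNReal.ofReal (Real.sqrt (D x)) = 0 := hx hx1
    have hs0 : Real.sqrt (D x) ≤ 0 := ENNReal.ofReal_eq_zero.1 hG0
    have hs1 : Real.sqrt (D x) = 0 := le_antisymm hs0 (Real.sqrt_nonneg _)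
    exact le_antisymm (Real.sqrt_eq_zero'.1 hs1) (hDnn x)
  -- conclusion
  rw [ae_restrict_iff' measurableSet_Icc]
  have h01 : ∀ᵐ x : ℝ, ¬(x = 0 ∨ x = 1) := by
    rw [ae_iff]
    simp only [not_not]
    have he : {x : ℝ | x = 0 ∨ x = 1} = {0} ∪ {1} := by ext y; simp [mem_union, or_comm]
    rw [he]
    exact measure_union_null Real.volume_singleton Real.volume_singleton
  filter_upwards [hD, hDzero, h01] with x hx hz h01x hxIcc
  push_neg at h01x
  have hxI : x ∈ Ioo (0:ℝ) 1 :=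
    ⟨lt_of_le_of_ne hxIcc.1 (Ne.symm h01x.1), lt_of_le_of_ne hxIcc.2 h01x.2⟩
  have hx0 : HasDerivAt F 0 x := by rw [← hz hxI]; exact hx
  have hFf : f =ᶠ[nhds x] F := by
    filter_upwards [Ioo_mem_nhds hxI.1 hxI.2] with y hy
    exact (hFeq y ⟨hy.1.le, hy.2.le⟩).symm
  exact hx0.congr_of_eventuallyEq hFf
end
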